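/- Let (x(n)) be an eventually positive solution of (E_A). Set α_i = liminf_{n→∞} Σ_{j=n+1}^{ρ_i(n)} p_i(j) and α = min_{1≤i≤m} α_i. If 0 < α ≤ −1 + √2, then liminf_{n→∞} x(n−1)/x(ρ(n)) ≥ (1 − α − √(1 − 2α − α²))/2. -/

import Mathlib

lemma tele_sum {x g : ℕ → ℝ} {a : ℕ} (ha : 1 ≤ a) (b : ℕ) (hab : a - 1 ≤ b)
    (hstep : ∀ j, a ≤ j → j ≤ b → x (j - 1) + g j ≤ x j) :
    x (a - 1) + ∑ j ∈ Finset.Icc a b, g j ≤ x b := by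
  induction b, hab using Nat.le_induction with
  | base =>
    have : Finset.Icc a (a-1) = ∅ := by
      apply Finset.Icc_eq_empty
      omega
    simp [this]
  | succ b hb ih =>
    rcases Nat.lt_or_ge b (a - 1) with h | h
    · omega
    have hsum : ∑ j ∈ Finset.Icc a (b+1), g j = (∑ j ∈ Finset.Icc a b, g j) + g (b+1) := by
      rw [← Finset.sum_Icc_succ_top (by omega : a ≤ b + 1)]
    have h1 : x (a-1) + ∑ j ∈ Finset.Icc a b, g j ≤ x b :=
      ih (fun j hj hj' => hstep j hj (by omega))
    have h2 := hstep (b+1) (by omega) (le_refl _)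
    simp only [Nat.add_sub_cancel] at h2
    rw [hsum]
    linarith

lemma abel_sum {P : ℕ → ℝ} (hP : ∀ j, 0 ≤ P j) {m : ℝ} (hm : 0 ≤ m) (b : ℕ) :
    ∀ k a, b + 1 = a + k →
      m ^ 2 / 2 - (max (m - ∑ j ∈ Finset.Icc a b, P j) 0) ^ 2 / 2 ≤
        ∑ j ∈ Finset.Icc a b, P j * max (m - ∑ j' ∈ Finset.Icc (j+1) b, P j') 0 := by
  intro k
  induction k with
  | zero =>
    intro a ha
    have : Finset.Icc a b = ∅ := Finset.Icc_eq_empty (by omega)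
    rw [this]
    simp [max_eq_left hm]
  | succ k ih =>
    intro a ha
    rcases Nat.lt_or_ge b a with h | h
    · have : Finset.Icc a b = ∅ := Finset.Icc_eq_empty (by omega)
      rw [this]
      simp [max_eq_left hm]
    · have hsplit : ∑ j ∈ Finset.Icc a b, P j * max (m - ∑ j' ∈ Finset.Icc (j+1) b, P j') 0
          = P a * max (m - ∑ j' ∈ Finset.Icc (a+1) b, P j') 0
            + ∑ j ∈ Finset.Icc (a+1) b, P j * max (m - ∑ j' ∈ Finset.Icc (j+1) b, P j') 0 := by
        rw [show Finset.Icc a b = Finset.Ico a (b+1) by rw [Finset.Ico_add_one_right_eq_Icc],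
            Finset.sum_eq_sum_Ico_succ_bot (by omega), Finset.Ico_add_one_right_eq_Icc]
      have hsplit2 : ∑ j ∈ Finset.Icc a b, P j
          = P a + ∑ j ∈ Finset.Icc (a+1) b, P j := by
        rw [show Finset.Icc a b = Finset.Ico a (b+1) by rw [Finset.Ico_add_one_right_eq_Icc],
            Finset.sum_eq_sum_Ico_succ_bot (by omega), Finset.Ico_add_one_right_eq_Icc]
      have ihs := ih (a+1) (by omega)
      rw [hsplit, hsplit2]
      set q := P a with hq
      set u := ∑ j' ∈ Finset.Icc (a+1) b, P j' with hu
      have hq0 : 0 ≤ q := hP a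
      have key : m^2/2 - (max (m - (q + u)) 0)^2/2 ≤ q * max (m - u) 0 + (m^2/2 - (max (m - u) 0)^2/2) := by
        rcases le_or_gt (m - u) 0 with h1 | h1
        · rw [max_eq_right h1, max_eq_right (by linarith)]
          nlinarith
        · rw [max_eq_left (le_of_lt h1)]
          rcases le_or_gt (m - (q+u)) 0 with h2 | h2
          · rw [max_eq_right h2]
            nlinarith
          · rw [max_eq_left (le_of_lt h2)]
            nlinarith
      linarith

/-- The key pointwise estimate. -/
lemma key_estimate (x P : ℕ → ℝ) (S R : ℕ → ℕ) (N : ℕ) (c msh : ℝ)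
    (hN : 1 ≤ N)
    (hpos : ∀ k, N ≤ k → 0 < x k)
    (hmono : ∀ a b, N ≤ a → a ≤ b → x a ≤ x b)
    (hP : ∀ j, 0 ≤ P j)
    (hstep : ∀ j, N + 1 ≤ j → x (j-1) + P j * x (S j) ≤ x j)
    (hSR : ∀ s j, s ≤ j → R s ≤ S j)
    (hRge : ∀ s, 1 ≤ s → s + 1 ≤ R s)
    (hRmono : ∀ a b, a ≤ b → R a ≤ R b)
    (hwin : ∀ s, N ≤ s → msh ≤ ∑ j ∈ Finset.Icc (s+1) (R s), P j)
    (hc : 0 ≤ c) (hcb : ∀ s, N ≤ s → c * x (R s) ≤ x (s-1))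
    (hm : 0 < msh)
    (n : ℕ) (hn : R N + N + 2 ≤ n) :
    msh^2/2 * x (R n) ≤ (1 - c - msh) * x (n-1) := by
  have hRN : R N ≤ n - 2 := by omega
  have hnN : N + 2 ≤ n := by omega
  -- least s₀ ≥ N with n ≤ R s₀
  have hex : ∃ s, N ≤ s ∧ n ≤ R s := ⟨n, by omega, by have := hRge n (by omega); omega⟩
  set s₀ := Nat.find hex with hs₀def
  obtain ⟨hs₀N, hs₀R⟩ := Nat.find_spec hex
  rw [← hs₀def] at hs₀N hs₀R
  have hs₀gt : N + 1 ≤ s₀ := by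
    rcases Nat.lt_or_ge N s₀ with h | h
    · omega
    · exfalso
      have heq : s₀ = N := by omega
      rw [heq] at hs₀R
      omega
  have hs₀le : s₀ ≤ n - 1 := by
    have hQ : N ≤ n - 1 ∧ n ≤ R (n-1) := ⟨by omega, by have := hRge (n-1) (by omega); omega⟩
    have := Nat.find_min' hex hQ
    omega
  have hs₀pred : R (s₀ - 1) ≤ n - 1 := by
    have hlt : s₀ - 1 < s₀ := by omega
    have hmin := Nat.find_min hex hlt
    push_neg at hmin
    have := hmin (by omega)
    omega
  set r := R n with hrdef
  have hrn : n + 1 ≤ r := hRge n (by omega)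
  have hxr : 0 < x r := hpos r (by omega)
  have hxn1 : 0 < x (n-1) := hpos (n-1) (by omega)
  -- forward estimate
  have Fwd : ∀ u, n ≤ u → x (n-1) + (∑ j ∈ Finset.Icc n (min u r), P j) * x r ≤ x u := by
    intro u hu
    have hstep' : ∀ j, n ≤ j → j ≤ min u r → x (j-1) + P j * x r ≤ x j := by
      intro j hj _
      have h1 : r ≤ S j := le_trans (hRmono n j hj) (hSR j j (le_refl _))
      have h2 : x r ≤ x (S j) := hmono r (S j) (by omega) h1
      have h3 := hstep j (by omega)
      nlinarith [hP j]
    have htel := tele_sum (a := n) (by omega) (min u r) (by omega) hstep'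
    rw [Finset.sum_mul]
    calc x (n-1) + ∑ j ∈ Finset.Icc n (min u r), P j * x r ≤ x (min u r) := htel
      _ ≤ x u := hmono _ u (by omega) (min_le_left _ _)
  -- per-j estimate for j ∈ [s₀, n-1]
  have claim_j : ∀ j, s₀ ≤ j → j ≤ n - 1 →
      x (n-1) + (max (msh - ∑ j' ∈ Finset.Icc (j+1) (n-1), P j') 0) * x r ≤ x (S j) := by
    intro j hj hj'
    have hRj : n ≤ R j := le_trans hs₀R (hRmono s₀ j hj)
    have hSj : n ≤ S j := le_trans hRj (hSR j j (le_refl _))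
    have hFwd := Fwd (S j) hSj
    have hmax : max (msh - ∑ j' ∈ Finset.Icc (j+1) (n-1), P j') 0
        ≤ ∑ j' ∈ Finset.Icc n (min (S j) r), P j' := by
      apply max_le _ (Finset.sum_nonneg fun j' _ => hP j')
      rcases le_or_gt (R j) r with hcase | hcase
      · have hsub : ∑ j' ∈ Finset.Icc n (R j), P j' ≤ ∑ j' ∈ Finset.Icc n (min (S j) r), P j' := by
          apply Finset.sum_le_sum_of_subset_of_nonneg
          · apply Finset.Icc_subset_Icc_right
            exact le_min (hSR j j (le_refl _)) hcase
          · exact fun j' _ _ => hP j'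
        have hwj := hwin j (by omega)
        have hsplit : ∑ j' ∈ Finset.Icc (j+1) (R j), P j'
            = (∑ j' ∈ Finset.Icc (j+1) (n-1), P j') + ∑ j' ∈ Finset.Icc n (R j), P j' := by
          have h1 : Finset.Icc (j+1) (R j) = Finset.Ico (j+1) (R j + 1) := by
            rw [Finset.Ico_add_one_right_eq_Icc]
          have h2 : Finset.Icc (j+1) (n-1) = Finset.Ico (j+1) n := by
            rw [← Finset.Ico_add_one_right_eq_Icc]; congr 1; omega
          have h3 : Finset.Icc n (R j) = Finset.Ico n (R j + 1) := by
            rw [Finset.Ico_add_one_right_eq_Icc]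
          rw [h1, h2, h3]
          exact (Finset.sum_Ico_consecutive _ (by omega) (by omega)).symm
        rw [hsplit] at hwj
        linarith
      · have hmin : min (S j) r = r := min_eq_right (le_trans (le_of_lt hcase) (hSR j j (le_refl _)))
        rw [hmin]
        have h1 : msh ≤ ∑ j' ∈ Finset.Icc (n+1) r, P j' := hwin n (by omega)
        have h2 : ∑ j' ∈ Finset.Icc (n+1) r, P j' ≤ ∑ j' ∈ Finset.Icc n r, P j' := by
          apply Finset.sum_le_sum_of_subset_of_nonneg
          · exact Finset.Icc_subset_Icc_left (by omega)
          · exact fun j' _ _ => hP j'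
        have h3 : 0 ≤ ∑ j' ∈ Finset.Icc (j+1) (n-1), P j' := Finset.sum_nonneg fun j' _ => hP j'
        linarith
    have : (max (msh - ∑ j' ∈ Finset.Icc (j+1) (n-1), P j') 0) * x r
        ≤ (∑ j' ∈ Finset.Icc n (min (S j) r), P j') * x r :=
      mul_le_mul_of_nonneg_right hmax (le_of_lt hxr)
    linarith
  -- assembly
  have htel2 := tele_sum (a := s₀) (by omega) (n-1)
      (by omega)
      (fun j hj hj' => hstep j (by omega))
  -- bound each term from below
  have hterm : ∀ j ∈ Finset.Icc s₀ (n-1),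
      P j * (x (n-1) + (max (msh - ∑ j' ∈ Finset.Icc (j+1) (n-1), P j') 0) * x r)
        ≤ P j * x (S j) := by
    intro j hj
    rw [Finset.mem_Icc] at hj
    exact mul_le_mul_of_nonneg_left (claim_j j hj.1 hj.2) (hP j)
  have hsum_ge := Finset.sum_le_sum hterm
  have hexp : ∑ j ∈ Finset.Icc s₀ (n-1),
      P j * (x (n-1) + (max (msh - ∑ j' ∈ Finset.Icc (j+1) (n-1), P j') 0) * x r)
      = (∑ j ∈ Finset.Icc s₀ (n-1), P j) * x (n-1)
        + (∑ j ∈ Finset.Icc s₀ (n-1), P j * max (msh - ∑ j' ∈ Finset.Icc (j+1) (n-1), P j') 0) * x r := by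
    rw [Finset.sum_mul, Finset.sum_mul]
    rw [← Finset.sum_add_distrib]
    congr 1
    ext j
    ring
  -- B ≥ msh
  have hB : msh ≤ ∑ j ∈ Finset.Icc s₀ (n-1), P j := by
    have hw := hwin (s₀ - 1) (by omega)
    have : ∑ j ∈ Finset.Icc (s₀ - 1 + 1) (R (s₀-1)), P j ≤ ∑ j ∈ Finset.Icc s₀ (n-1), P j := by
      apply Finset.sum_le_sum_of_subset_of_nonneg
      · rw [show s₀ - 1 + 1 = s₀ by omega]
        exact Finset.Icc_subset_Icc_right hs₀pred
      · exact fun j' _ _ => hP j'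
    linarith
  -- T ≥ msh²/2
  have hT : msh^2/2 ≤ ∑ j ∈ Finset.Icc s₀ (n-1), P j * max (msh - ∑ j' ∈ Finset.Icc (j+1) (n-1), P j') 0 := by
    have habel := abel_sum hP (le_of_lt hm) (n-1) ((n-1) + 1 - s₀) s₀ (by omega)
    have hmax0 : max (msh - ∑ j ∈ Finset.Icc s₀ (n-1), P j) 0 = 0 :=
      max_eq_right (by linarith)
    rw [hmax0] at habel
    simpa using habel
  -- c-term
  have hcterm : c * x (n-1) ≤ x (s₀ - 1) := by
    have h1 := hcb s₀ (by omega)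
    have h2 : x (n-1) ≤ x (R s₀) := hmono (n-1) (R s₀) (by omega) (by omega)
    nlinarith
  -- combine
  have hfinal : x (s₀-1) + ((∑ j ∈ Finset.Icc s₀ (n-1), P j) * x (n-1)
      + (∑ j ∈ Finset.Icc s₀ (n-1), P j * max (msh - ∑ j' ∈ Finset.Icc (j+1) (n-1), P j') 0) * x r)
      ≤ x (n-1) := by
    rw [← hexp]
    linarith
  nlinarith [mul_le_mul_of_nonneg_right hB (le_of_lt hxn1),
    mul_le_mul_of_nonneg_right hT (le_of_lt hxr)]



/-- `ρ_i(n) = min_{s ≥ n} σ_i(s)`. -/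
noncomputable def rhoi {m : ℕ} (σ : Fin m → ℕ → ℕ) (i : Fin m) (n : ℕ) : ℕ :=
  sInf (σ i '' Set.Ici n)

/-- `ρ(n) = min_{1 ≤ i ≤ m} ρ_i(n)`. -/
noncomputable def rho {m : ℕ} [NeZero m] (σ : Fin m → ℕ → ℕ) (n : ℕ) : ℕ :=
  Finset.univ.inf' Finset.univ_nonempty (fun i => rhoi σ i n)

set_option maxHeartbeats 2000000 in
/-- Lemma 2.2′: if `x` is an eventually positive solution of the advanced equation,
`α_i = liminf_{n→∞} ∑_{j=n+1}^{ρ_i(n)} p_i(j)`, `α = min_i α_i` and `0 < α ≤ -1 + √2`,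
then `liminf_{n→∞} x(n-1)/x(ρ(n)) ≥ (1 - α - √(1 - 2α - α²))/2`. -/
theorem stmt_7 {m : ℕ} [NeZero m] (p : Fin m → ℕ → ℝ) (σ : Fin m → ℕ → ℕ)
    (hp : ∀ i : Fin m, ∀ n : ℕ, 0 ≤ p i n)
    (hσ : ∀ i : Fin m, ∀ n : ℕ, 1 ≤ n → n + 1 ≤ σ i n)
    (x : ℕ → ℝ)
    (hxeq : ∀ n : ℕ, 1 ≤ n → x n - x (n - 1) - ∑ i : Fin m, p i n * x (σ i n) = 0)
    (hxpos : ∃ N : ℕ, ∀ n ≥ N, 0 < x n)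
    (α : ℝ)
    (hα : α = Finset.univ.inf' Finset.univ_nonempty (fun i : Fin m =>
        Filter.liminf (fun n : ℕ => ∑ j ∈ Finset.Icc (n + 1) (rhoi σ i n), p i j) Filter.atTop))
    (hα0 : 0 < α) (hα1 : α ≤ -1 + Real.sqrt 2) :
    (1 - α - Real.sqrt (1 - 2 * α - α ^ 2)) / 2 ≤
      Filter.liminf (fun n : ℕ => x (n - 1) / x (rho σ n)) Filter.atTop := by
  classical
  obtain ⟨N₀, hN₀⟩ := hxpos
  set M₁ : ℕ := N₀ + 1 with hM₁
  have hι : 0 < m := Nat.pos_of_ne_zero (NeZero.ne m)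
  set ι : Fin m := ⟨0, hι⟩ with hιdef
  set P : ℕ → ℝ := p ι with hPdef
  set S : ℕ → ℕ := σ ι with hSdef
  set R : ℕ → ℕ := rhoi σ ι with hRdef
  -- basic facts about rhoi
  have hattain : ∀ (i : Fin m) (s : ℕ), ∃ t, s ≤ t ∧ rhoi σ i s = σ i t := by
    intro i s
    have hne : (σ i '' Set.Ici s).Nonempty := ⟨σ i s, ⟨s, le_refl s, rfl⟩⟩
    obtain ⟨t, ht, heq⟩ := Nat.sInf_mem hne
    exact ⟨t, ht, heq.symm⟩
  have hSR : ∀ s j, s ≤ j → R s ≤ S j := by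
    intro s j h
    exact Nat.sInf_le ⟨j, h, rfl⟩
  have hRgeI : ∀ (i : Fin m) (s : ℕ), 1 ≤ s → s + 1 ≤ rhoi σ i s := by
    intro i s hs
    obtain ⟨t, ht, heq⟩ := hattain i s
    rw [heq]
    have := hσ i t (by omega)
    omega
  have hRge : ∀ s, 1 ≤ s → s + 1 ≤ R s := fun s hs => hRgeI ι s hs
  have hRmono : ∀ a b, a ≤ b → R a ≤ R b := by
    intro a b hab
    obtain ⟨t, ht, heq⟩ := hattain ι b
    rw [hRdef, heq]
    exact hSR a t (le_trans hab ht)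
  have hrho_le : ∀ n, rho σ n ≤ R n := fun n => Finset.inf'_le _ (Finset.mem_univ ι)
  have hrho_ge : ∀ n, 1 ≤ n → n + 1 ≤ rho σ n := by
    intro n hn
    apply Finset.le_inf'
    intro i _
    exact hRgeI i n hn
  -- positivity and monotonicity
  have hpos' : ∀ k, M₁ ≤ k → 0 < x k := fun k hk => hN₀ k (by omega)
  have hmono : ∀ a b, M₁ ≤ a → a ≤ b → x a ≤ x b := by
    intro a b ha hab
    induction b, hab using Nat.le_induction with
    | base => exact le_refl _
    | succ b hb ih =>
      refine le_trans ih ?_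
      have heq := hxeq (b+1) (by omega)
      simp only [Nat.add_sub_cancel] at heq
      have hsum : 0 ≤ ∑ i : Fin m, p i (b+1) * x (σ i (b+1)) := by
        apply Finset.sum_nonneg
        intro l _
        apply mul_nonneg (hp l (b+1))
        exact le_of_lt (hpos' (σ l (b+1)) (by have := hσ l (b+1) (by omega); omega))
      linarith
  have hstep : ∀ j, M₁ + 1 ≤ j → x (j-1) + P j * x (S j) ≤ x j := by
    intro j hj
    have heq := hxeq j (by omega)
    have hsingle : P j * x (S j) ≤ ∑ i : Fin m, p i j * x (σ i j) := by
      apply Finset.single_le_sum (f := fun l => p l j * x (σ l j))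
      · intro l _
        apply mul_nonneg (hp l j)
        exact le_of_lt (hpos' (σ l j) (by have := hσ l j (by omega); omega))
      · exact Finset.mem_univ ι
    linarith
  -- window sums
  set Wi : ℕ → ℝ := fun n => ∑ j ∈ Finset.Icc (n + 1) (R n), P j with hWidef
  have hWnonneg : ∀ n, 0 ≤ Wi n := fun n => Finset.sum_nonneg fun j _ => hp ι j
  have hαle : α ≤ Filter.liminf Wi Filter.atTop := by
    rw [hα]
    exact Finset.inf'_le _ (Finset.mem_univ ι)
  -- the two ratio sequences
  set U : ℕ → ℝ := fun n => x (n-1) / x (R n) with hUdef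
  set V : ℕ → ℝ := fun n => x (n-1) / x (rho σ n) with hVdef
  set d : ℝ := Filter.liminf U Filter.atTop with hddef
  -- eventual elementary facts
  have hfacts : ∀ n, M₁ + 2 ≤ n →
      0 < x (n-1) ∧ 0 < x (R n) ∧ 0 < x (rho σ n) ∧ U n ≤ V n ∧ V n ≤ 1 ∧ 0 < U n := by
    intro n hn
    have h1 : 0 < x (n-1) := hpos' _ (by omega)
    have hR1 : n + 1 ≤ R n := hRge n (by omega)
    have hrho1 : n + 1 ≤ rho σ n := hrho_ge n (by omega)
    have h2 : 0 < x (R n) := hpos' _ (by omega)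
    have h3 : 0 < x (rho σ n) := hpos' _ (by omega)
    have h4 : x (rho σ n) ≤ x (R n) := hmono _ _ (by omega) (hrho_le n)
    have h5 : x (n-1) ≤ x (rho σ n) := hmono _ _ (by omega) (by omega)
    refine ⟨h1, h2, h3, ?_, ?_, ?_⟩
    · rw [hUdef, hVdef]
      rw [div_le_div_iff₀ h2 h3]
      exact mul_le_mul_of_nonneg_left h4 (le_of_lt h1)
    · rw [hVdef]
      exact (div_le_one h3).mpr h5
    · exact div_pos h1 h2
  have hUev0 : ∀ᶠ n in Filter.atTop, 0 ≤ U n :=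
    Filter.eventually_atTop.mpr ⟨M₁ + 2, fun n hn => le_of_lt (hfacts n hn).2.2.2.2.2⟩
  have hUev1 : ∀ᶠ n in Filter.atTop, U n ≤ 1 :=
    Filter.eventually_atTop.mpr ⟨M₁ + 2, fun n hn =>
      le_trans (hfacts n hn).2.2.2.1 (hfacts n hn).2.2.2.2.1⟩
  have hUcobdd : Filter.IsCoboundedUnder (· ≥ ·) Filter.atTop U :=
    Filter.isCoboundedUnder_ge_of_eventually_le Filter.atTop hUev1
  have hUbdd : Filter.IsBoundedUnder (· ≥ ·) Filter.atTop U := ⟨0, hUev0⟩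
  -- reduce to d
  have hmain : (1 - α - Real.sqrt (1 - 2 * α - α ^ 2)) / 2 ≤ d → 
      (1 - α - Real.sqrt (1 - 2 * α - α ^ 2)) / 2 ≤
        Filter.liminf (fun n : ℕ => x (n - 1) / x (rho σ n)) Filter.atTop := by
    intro h
    refine le_trans h ?_
    apply Filter.liminf_le_liminf
    · exact Filter.eventually_atTop.mpr ⟨M₁ + 2, fun n hn => (hfacts n hn).2.2.2.1⟩
    · exact hUbdd
    · exact Filter.isCoboundedUnder_ge_of_eventually_le Filter.atTop
        (Filter.eventually_atTop.mpr ⟨M₁ + 2, fun n hn => (hfacts n hn).2.2.2.2.1⟩)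
  apply hmain
  -- the key recursive inequality
  have hkey : ∀ msh : ℝ, 0 < msh → msh < α → ∀ c : ℝ, 0 ≤ c →
      (∀ᶠ s in Filter.atTop, c * x (R s) ≤ x (s-1)) →
      msh^2/2 ≤ (1 - c - msh) * d ∧ 0 < 1 - c - msh := by
    intro msh hmsh hmshα c hc hcbev
    have hwinev : ∀ᶠ s in Filter.atTop, msh < Wi s :=
      Filter.eventually_lt_of_lt_liminf (lt_of_lt_of_le hmshα hαle)
        (Filter.isBoundedUnder_of ⟨0, fun n => hWnonneg n⟩)
    obtain ⟨N₁, hN₁⟩ := Filter.eventually_atTop.mp hwinev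
    obtain ⟨N₂, hN₂⟩ := Filter.eventually_atTop.mp hcbev
    set NN : ℕ := max (max N₁ N₂) (M₁ + 2) with hNN
    have hkeyest := key_estimate x P S R NN c msh
      (by omega)
      (fun k hk => hpos' k (by omega))
      (fun a b ha hab => hmono a b (by omega) hab)
      (fun j => hp ι j)
      (fun j hj => hstep j (by omega))
      hSR
      hRge
      hRmono
      (fun s hs => le_of_lt (hN₁ s (by omega)))
      hc
      (fun s hs => hN₂ s (by omega))
      hmsh
    -- positivity of 1 - c - msh
    have hκ : 0 < 1 - c - msh := by
      by_contra hcon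
      push_neg at hcon
      set n := R NN + NN + 2 with hn
      have hkn := hkeyest n (le_refl _)
      have hRNN : NN + 1 ≤ R NN := hRge NN (by omega)
      have hxRn : 0 < x (R n) := hpos' _ (by have := hRge n (by omega); omega)
      have hxn1 : 0 < x (n-1) := hpos' _ (by omega)
      have hpos1 : 0 < msh^2/2 * x (R n) := by positivity
      have hneg1 : (1 - c - msh) * x (n-1) ≤ 0 :=
        mul_nonpos_iff.mpr (Or.inr ⟨hcon, le_of_lt hxn1⟩)
      linarith
    refine ⟨?_, hκ⟩
    -- eventual lower bound on U
    have hUev : ∀ᶠ n in Filter.atTop, msh^2/2/(1 - c - msh) ≤ U n := by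
      rw [Filter.eventually_atTop]
      refine ⟨R NN + NN + 2, fun n hn => ?_⟩
      have hkn := hkeyest n hn
      have hRNN : NN + 1 ≤ R NN := hRge NN (by omega)
      have hxRn : 0 < x (R n) := hpos' _ (by have := hRge n (by omega); omega)
      rw [hUdef, div_le_div_iff₀ hκ hxRn]
      linarith
    have hdge : msh^2/2/(1 - c - msh) ≤ d := Filter.le_liminf_of_le hUcobdd hUev
    rw [div_le_iff₀ hκ] at hdge
    rw [mul_comm (1 - c - msh) d]
    exact hdge
  -- d is positive
  have hd0 : 0 < d := by
    have h := hkey (α/2) (by linarith) (by linarith) 0 (le_refl 0)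
      (Filter.eventually_atTop.mpr ⟨M₁ + 2, fun s hs => by
        have := (hfacts s hs).1
        nlinarith⟩)
    obtain ⟨h1, h2⟩ := h
    nlinarith
  -- quadratic inequality for each msh < α
  have hQm : ∀ msh : ℝ, 0 < msh → msh < α → d^2 - (1 - msh) * d + msh^2/2 ≤ 0 := by
    intro msh hmsh hmshα
    by_contra hcon
    push_neg at hcon
    set C : ℝ := (1 - msh) * d - msh^2/2 with hC
    have hdC : C < d^2 := by rw [hC]; nlinarith
    set δ : ℝ := (d^2 - C)/(2*d) with hδ
    have hδ0 : 0 < δ := div_pos (by linarith) (by linarith)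
    set c : ℝ := max 0 (d - δ) with hcdef
    have hcd : c < d := max_lt hd0 (by linarith)
    have hc0 : 0 ≤ c := le_max_left _ _
    have hcbev : ∀ᶠ s in Filter.atTop, c * x (R s) ≤ x (s-1) := by
      have hev := Filter.eventually_lt_of_lt_liminf (hddef ▸ hcd) hUbdd
      have hev2 : ∀ᶠ s in Filter.atTop, M₁ + 2 ≤ s := Filter.eventually_atTop.mpr ⟨M₁+2, fun s hs => hs⟩
      filter_upwards [hev, hev2] with s hs1 hs2
      have hfs := hfacts s hs2
      have : c < x (s-1) / x (R s) := hs1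
      rw [lt_div_iff₀ hfs.2.1] at this
      linarith
    obtain ⟨h1, h2⟩ := hkey msh hmsh hmshα c hc0 hcbev
    -- h1 : msh^2/2 ≤ (1 - c - msh) * d
    have hcdmul : (d - δ) * d ≤ c * d :=
      mul_le_mul_of_nonneg_right (le_max_right 0 (d - δ)) (le_of_lt hd0)
    have hcdC : c * d ≤ C := by rw [hC]; nlinarith
    have hexpand : (d - δ) * d = d^2 - δ * d := by ring
    have hδd : δ * d = (d^2 - C)/2 := by
      rw [hδ]
      field_simp
    linarith [hcdmul, hexpand, hδd, hdC, hcdC]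
  -- pass to the limit msh → α
  have hQA : d^2 - (1 - α) * d + α^2/2 ≤ 0 := by
    by_contra hcon
    push_neg at hcon
    have hE0 : 0 < d^2 - (1 - α) * d + α^2/2 := hcon
    obtain ⟨ζ, hζ0, hζhalf, hζle⟩ : ∃ ζ : ℝ, 0 < ζ ∧ ζ ≤ α/2 ∧
        ζ * (d + α + 1) ≤ d^2 - (1 - α) * d + α^2/2 := by
      refine ⟨min (α/2) ((d^2 - (1 - α) * d + α^2/2)/(d + α + 1)), ?_, min_le_left _ _, ?_⟩
      · exact lt_min (by linarith) (div_pos hE0 (by linarith))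
      · exact (le_div_iff₀ (by linarith)).mp (min_le_right _ _)
    have hq := hQm (α - ζ) (by linarith) (by linarith)
    nlinarith [hq, hζle, hζ0, sq_nonneg ζ, mul_pos hζ0 hζ0]
  -- final algebra with the square root
  have hdisc : 0 ≤ 1 - 2 * α - α ^ 2 := by
    have h1 : α + 1 ≤ Real.sqrt 2 := by linarith
    have h2 : (α+1) * (α+1) ≤ Real.sqrt 2 * Real.sqrt 2 :=
      mul_self_le_mul_self (by linarith) h1
    have h3 : Real.sqrt 2 * Real.sqrt 2 = 2 := Real.mul_self_sqrt (by norm_num)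
    nlinarith [h2, h3]
  have hD0 : 0 ≤ Real.sqrt (1 - 2 * α - α ^ 2) := Real.sqrt_nonneg _
  have hDsq : Real.sqrt (1 - 2 * α - α ^ 2) * Real.sqrt (1 - 2 * α - α ^ 2)
      = 1 - 2 * α - α ^ 2 := Real.mul_self_sqrt hdisc
  by_contra hcon
  push_neg at hcon
  have h1 : Real.sqrt (1 - 2 * α - α ^ 2) < 1 - α - 2*d := by linarith
  have h2 := mul_self_lt_mul_self hD0 h1
  rw [hDsq] at h2
  nlinarith [hQA, h2]
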